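/- Let V₁, …, Vₙ ∈ ℝᵈ, let w₁, …, wₙ ≥ 0, and let τ > 0. Set 𝔖 = (1/n) Σᵢ wᵢ Vᵢ Vᵢᵀ, 𝔖(i) = 𝔖 − (wᵢ/n) Vᵢ Vᵢᵀ, c = (1/n)·tr((𝔖 + τ Id)⁻¹), ηᵢ = (1/n) Vᵢᵀ(𝔖(i) + τ Id)⁻¹ Vᵢ − c, and Mᵢᵢ = 1 − (wᵢ/n)·Vᵢᵀ(𝔖 + τ Id)⁻¹ Vᵢ. Then (i) (1/n) Σᵢ (1 − Mᵢᵢ) = d/n − τ·c, and (ii) |(1/n) Σᵢ (1 − Mᵢᵢ) − ((1/n) Σᵢ wᵢ Mᵢᵢ)·c| ≤ (sup_i |ηᵢ|) · (1/n) Σᵢ wᵢ. -/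

import Mathlib

noncomputable section

open scoped BigOperators
open Matrix

namespace Statement9Aux

variable {d : ℕ}

lemma vecMulVec_posSemidef (v : Fin d → ℝ) : (Matrix.vecMulVec v v).PosSemidef := by
  have h := Matrix.posSemidef_conjTranspose_mul_self (Matrix.replicateRow Unit v)
  rwa [Matrix.conjTranspose_replicateRow, star_trivial, ← Matrix.vecMulVec_eq Unit] at h

lemma posSemidef_smul {M : Matrix (Fin d) (Fin d) ℝ} (hM : M.PosSemidef) {c : ℝ} (hc : 0 ≤ c) :
    (c • M).PosSemidef := by
  refine Matrix.PosSemidef.of_dotProduct_mulVec_nonneg ?_ (fun x => ?_)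
  · show (c • M)ᴴ = c • M
    rw [Matrix.conjTranspose_smul, hM.1.eq, star_trivial]
  · rw [Matrix.smul_mulVec, dotProduct_smul, smul_eq_mul]
    exact mul_nonneg hc (hM.dotProduct_mulVec_nonneg x)

lemma posSemidef_sum {ι : Type*} (s : Finset ι) (f : ι → Matrix (Fin d) (Fin d) ℝ)
    (h : ∀ i ∈ s, (f i).PosSemidef) : (∑ i ∈ s, f i).PosSemidef := by
  classical
  induction s using Finset.induction_on with
  | empty => simpa using (Matrix.PosSemidef.zero (n := Fin d) (R := ℝ))
  | insert _ _ hx ih =>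
    rw [Finset.sum_insert hx]
    exact ((h _ (Finset.mem_insert_self _ _)).add
      (ih fun i hi => h i (Finset.mem_insert_of_mem hi)))

lemma quad_nonneg {M : Matrix (Fin d) (Fin d) ℝ} (hM : M.PosSemidef) (x : Fin d → ℝ) :
    0 ≤ x ⬝ᵥ M *ᵥ x := by
  have h := hM.dotProduct_mulVec_nonneg x
  rwa [star_trivial] at h

lemma vecMulVec_mulVec' (v x : Fin d → ℝ) :
    Matrix.vecMulVec v v *ᵥ x = (v ⬝ᵥ x) • v := by
  ext j
  simp only [Matrix.mulVec, Matrix.vecMulVec_apply, dotProduct, Pi.smul_apply, smul_eq_mul,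
    Finset.sum_mul, Finset.mul_sum]
  exact Finset.sum_congr rfl fun k _ => by ring

lemma trace_mul_vecMulVec (M : Matrix (Fin d) (Fin d) ℝ) (v : Fin d → ℝ) :
    Matrix.trace (M * Matrix.vecMulVec v v) = v ⬝ᵥ M *ᵥ v := by
  simp only [Matrix.trace, Matrix.diag_apply, Matrix.mul_apply, Matrix.vecMulVec_apply,
    dotProduct, Matrix.mulVec, Finset.mul_sum]
  exact Finset.sum_congr rfl fun i _ => Finset.sum_congr rfl fun j _ => by ring

end Statement9Aux

open Statement9Aux

theorem statement9 {n d : ℕ} (V : Fin n → Fin d → ℝ) (w : Fin n → ℝ)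
    (hw : ∀ i, 0 ≤ w i) (τ : ℝ) (hτ : 0 < τ)
    (S : Matrix (Fin d) (Fin d) ℝ)
    (hS : S = (1 / (n : ℝ)) • ∑ i, w i • Matrix.vecMulVec (V i) (V i))
    (Si : Fin n → Matrix (Fin d) (Fin d) ℝ)
    (hSi : ∀ i, Si i = S - (w i / (n : ℝ)) • Matrix.vecMulVec (V i) (V i))
    (c : ℝ)
    (hc : c = (1 / (n : ℝ)) * Matrix.trace ((S + τ • (1 : Matrix (Fin d) (Fin d) ℝ))⁻¹))
    (η : Fin n → ℝ)
    (hη : ∀ i, η i = (1 / (n : ℝ)) *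
      (V i ⬝ᵥ ((Si i + τ • (1 : Matrix (Fin d) (Fin d) ℝ))⁻¹.mulVec (V i))) - c)
    (Mdiag : Fin n → ℝ)
    (hM : ∀ i, Mdiag i = 1 - (w i / (n : ℝ)) *
      (V i ⬝ᵥ ((S + τ • (1 : Matrix (Fin d) (Fin d) ℝ))⁻¹.mulVec (V i)))) :
    -- (i)
    (1 / (n : ℝ)) * ∑ i, (1 - Mdiag i) = (d : ℝ) / (n : ℝ) - τ * c ∧
    -- (ii)
    |(1 / (n : ℝ)) * ∑ i, (1 - Mdiag i) - ((1 / (n : ℝ)) * ∑ i, w i * Mdiag i) * c| ≤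
      (⨆ i, |η i|) * ((1 / (n : ℝ)) * ∑ i, w i) := by
  classical
  rcases eq_or_ne n 0 with hn | hn
  · subst hn
    have hc0 : c = 0 := by simp [hc]
    refine ⟨by simp [hc0], by simp [hc0]⟩
  have hn' : 0 < (n : ℝ) := by positivity
  set A : Matrix (Fin d) (Fin d) ℝ := S + τ • (1 : Matrix (Fin d) (Fin d) ℝ) with hA_def
  set B : Fin n → Matrix (Fin d) (Fin d) ℝ :=
    fun i => Si i + τ • (1 : Matrix (Fin d) (Fin d) ℝ) with hB_def
  set q : Fin n → ℝ := fun i => V i ⬝ᵥ A⁻¹ *ᵥ V i with hq_def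
  set b : Fin n → ℝ := fun i => V i ⬝ᵥ (B i)⁻¹ *ᵥ V i with hb_def
  -- positive definiteness
  have hτ1 : (τ • (1 : Matrix (Fin d) (Fin d) ℝ)).PosDef := by
    rw [Matrix.smul_one_eq_diagonal]
    exact Matrix.PosDef.diagonal fun _ => hτ
  have hSpsd : S.PosSemidef := by
    rw [hS]
    exact posSemidef_smul
      (posSemidef_sum _ _ fun i _ => posSemidef_smul (vecMulVec_posSemidef _) (hw i))
      (by positivity)
  have hSipsd : ∀ i, (Si i).PosSemidef := by
    intro i
    have hSi' : Si i = (1 / (n : ℝ)) • ∑ j ∈ Finset.univ.erase i,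
        w j • Matrix.vecMulVec (V j) (V j) := by
      rw [hSi, hS, ← Finset.sum_erase_add _ _ (Finset.mem_univ i), smul_add, smul_smul]
      have : (1 / (n : ℝ)) * w i = w i / (n : ℝ) := by ring
      rw [this, add_sub_cancel_right]
    rw [hSi']
    exact posSemidef_smul
      (posSemidef_sum _ _ fun j _ => posSemidef_smul (vecMulVec_posSemidef _) (hw j))
      (by positivity)
  have hA : A.PosDef := Matrix.PosDef.posSemidef_add hSpsd hτ1
  have hB : ∀ i, (B i).PosDef := fun i => Matrix.PosDef.posSemidef_add (hSipsd i) hτ1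
  have hAdet : IsUnit A.det := (Matrix.isUnit_iff_isUnit_det A).mp hA.isUnit
  have hBdet : ∀ i, IsUnit (B i).det := fun i => (Matrix.isUnit_iff_isUnit_det _).mp (hB i).isUnit
  have hqnn : ∀ i, 0 ≤ q i := fun i => quad_nonneg hA.inv.posSemidef _
  have hbnn : ∀ i, 0 ≤ b i := fun i => quad_nonneg (hB i).inv.posSemidef _
  -- Sherman-Morrison type identity
  have hAB : ∀ i, A = B i + (w i / (n : ℝ)) • Matrix.vecMulVec (V i) (V i) := by
    intro i
    have h2 : B i = S - (w i / (n : ℝ)) • Matrix.vecMulVec (V i) (V i)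
        + τ • (1 : Matrix (Fin d) (Fin d) ℝ) := by simp only [hB_def, hSi]
    rw [h2, hA_def]
    abel
  have hkey : ∀ i, (B i)⁻¹ =
      A⁻¹ + (w i / (n : ℝ)) • ((B i)⁻¹ * Matrix.vecMulVec (V i) (V i) * A⁻¹) := by
    intro i
    calc (B i)⁻¹ = (B i)⁻¹ * (A * A⁻¹) := by
          rw [Matrix.mul_nonsing_inv _ hAdet, Matrix.mul_one]
      _ = ((B i)⁻¹ * A) * A⁻¹ := by rw [Matrix.mul_assoc]
      _ = ((B i)⁻¹ * (B i + (w i / (n : ℝ)) • Matrix.vecMulVec (V i) (V i))) * A⁻¹ := by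
          rw [← hAB i]
      _ = (1 + (w i / (n : ℝ)) • ((B i)⁻¹ * Matrix.vecMulVec (V i) (V i))) * A⁻¹ := by
          rw [Matrix.mul_add, Matrix.nonsing_inv_mul _ (hBdet i), Matrix.mul_smul]
      _ = A⁻¹ + (w i / (n : ℝ)) • ((B i)⁻¹ * Matrix.vecMulVec (V i) (V i) * A⁻¹) := by
          rw [Matrix.add_mul, Matrix.one_mul, Matrix.smul_mul]
  have hquad : ∀ i, b i = q i + (w i / (n : ℝ)) * (q i * b i) := by
    intro i
    have h1 : ((B i)⁻¹ * Matrix.vecMulVec (V i) (V i) * A⁻¹) *ᵥ V i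
        = q i • ((B i)⁻¹ *ᵥ V i) := by
      rw [← Matrix.mulVec_mulVec, ← Matrix.mulVec_mulVec, vecMulVec_mulVec',
        Matrix.mulVec_smul]
    calc b i = V i ⬝ᵥ (B i)⁻¹ *ᵥ V i := rfl
      _ = V i ⬝ᵥ (A⁻¹ + (w i / (n : ℝ)) • ((B i)⁻¹ * Matrix.vecMulVec (V i) (V i) * A⁻¹)) *ᵥ V i := by
          rw [← hkey i]
      _ = q i + (w i / (n : ℝ)) * (q i * b i) := by
          rw [Matrix.add_mulVec, Matrix.smul_mulVec, dotProduct_add, dotProduct_smul,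
            h1, dotProduct_smul]
          simp only [smul_eq_mul]
          try ring
  have hMq : ∀ i, Mdiag i = 1 - (w i / (n : ℝ)) * q i := hM
  have hqb : ∀ i, q i = b i * Mdiag i := by
    intro i
    rw [hMq i]
    linear_combination -hquad i
  have hMpos : ∀ i, 0 < Mdiag i := by
    intro i
    have hαb : 0 ≤ (w i / (n : ℝ)) * b i :=
      mul_nonneg (div_nonneg (hw i) hn'.le) (hbnn i)
    have h1 : Mdiag i * (1 + (w i / (n : ℝ)) * b i) = 1 := by
      rw [hMq i]
      linear_combination (w i / (n : ℝ)) * hquad i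
    nlinarith [h1, hαb]
  have hMle : ∀ i, Mdiag i ≤ 1 := by
    intro i
    rw [hMq i]
    nlinarith [mul_nonneg (div_nonneg (hw i) hn'.le) (hqnn i)]
  -- trace computation
  have htr1 : Matrix.trace (A⁻¹ * S) = (1 / (n : ℝ)) * ∑ i, w i * q i := by
    have e1 : ∀ i, Matrix.trace (A⁻¹ * (w i • Matrix.vecMulVec (V i) (V i))) = w i * q i := by
      intro i
      rw [Matrix.mul_smul, Matrix.trace_smul, trace_mul_vecMulVec, smul_eq_mul]
    rw [hS, Matrix.mul_smul, Matrix.trace_smul, Matrix.mul_sum, Matrix.trace_sum,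
      smul_eq_mul, Finset.sum_congr rfl fun i _ => e1 i]
  have htr2 : Matrix.trace (A⁻¹ * S) = (d : ℝ) - τ * Matrix.trace A⁻¹ := by
    have hSA : S = A - τ • (1 : Matrix (Fin d) (Fin d) ℝ) := by rw [hA_def]; abel
    rw [hSA, Matrix.mul_sub, Matrix.nonsing_inv_mul _ hAdet, Matrix.mul_smul, Matrix.mul_one,
      Matrix.trace_sub, Matrix.trace_one, Matrix.trace_smul, smul_eq_mul]
    simp
  have parti : (1 / (n : ℝ)) * ∑ i, (1 - Mdiag i) = (d : ℝ) / (n : ℝ) - τ * c := by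
    have hsum : ∑ i, (1 - Mdiag i) = (1 / (n : ℝ)) * ∑ i, w i * q i := by
      rw [Finset.mul_sum]
      refine Finset.sum_congr rfl fun i _ => ?_
      rw [hMq i]
      ring
    rw [hsum, ← htr1, htr2, hc]
    field_simp
    try ring
  refine ⟨parti, ?_⟩
  -- part (ii)
  have hdecomp : ∀ i, 1 - Mdiag i = w i * Mdiag i * η i + w i * Mdiag i * c := by
    intro i
    have hb' : η i + c = (1 / (n : ℝ)) * b i := by rw [hη i]; ring
    have : 1 - Mdiag i = w i * Mdiag i * ((1 / (n : ℝ)) * b i) := by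
      have h3 := hqb i
      rw [hMq i] at h3 ⊢
      linear_combination (w i / (n : ℝ)) * h3
    rw [this, ← hb']
    ring
  have hkey2 : (1 / (n : ℝ)) * ∑ i, (1 - Mdiag i) - ((1 / (n : ℝ)) * ∑ i, w i * Mdiag i) * c
      = (1 / (n : ℝ)) * ∑ i, w i * Mdiag i * η i := by
    have : ∑ i, (1 - Mdiag i) = (∑ i, w i * Mdiag i * η i) + (∑ i, w i * Mdiag i) * c := by
      rw [Finset.sum_mul, ← Finset.sum_add_distrib]
      exact Finset.sum_congr rfl fun i _ => hdecomp i
    rw [this]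
    ring
  rw [hkey2]
  have hne : Nonempty (Fin n) := ⟨⟨0, Nat.pos_of_ne_zero hn⟩⟩
  have hbdd : BddAbove (Set.range fun i => |η i|) := Set.Finite.bddAbove (Set.finite_range _)
  have hsup : ∀ i, |η i| ≤ ⨆ j, |η j| := fun i => le_ciSup hbdd i
  have hterm : ∀ i, |w i * Mdiag i * η i| ≤ w i * (⨆ j, |η j|) := by
    intro i
    rw [abs_mul, abs_of_nonneg (mul_nonneg (hw i) (hMpos i).le)]
    calc w i * Mdiag i * |η i| ≤ w i * 1 * |η i| := by
          apply mul_le_mul_of_nonneg_right _ (abs_nonneg _)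
          exact mul_le_mul_of_nonneg_left (hMle i) (hw i)
      _ = w i * |η i| := by ring
      _ ≤ w i * (⨆ j, |η j|) := mul_le_mul_of_nonneg_left (hsup i) (hw i)
  calc |(1 / (n : ℝ)) * ∑ i, w i * Mdiag i * η i|
      = (1 / (n : ℝ)) * |∑ i, w i * Mdiag i * η i| := by
        rw [abs_mul, abs_of_nonneg (by positivity : (0:ℝ) ≤ 1 / (n:ℝ))]
    _ ≤ (1 / (n : ℝ)) * ∑ i, |w i * Mdiag i * η i| := by
        apply mul_le_mul_of_nonneg_left (Finset.abs_sum_le_sum_abs _ _) (by positivity)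
    _ ≤ (1 / (n : ℝ)) * ∑ i, w i * (⨆ j, |η j|) := by
        apply mul_le_mul_of_nonneg_left (Finset.sum_le_sum fun i _ => hterm i) (by positivity)
    _ = (⨆ i, |η i|) * ((1 / (n : ℝ)) * ∑ i, w i) := by
        rw [← Finset.sum_mul]
        ring
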